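/- Existence for the obstacle DPP: under the assumptions α ∈ [0,1), β = 1−α, F : Γ → ℝ and Ψ : ℝ^N → ℝ bounded Borel with Ψ ≤ F on Γ, there exists a bounded Borel function u : X → ℝ satisfying u(x) = max{Ψ(x), (α/2) sup_{B_ε(x)} u + (α/2) inf_{B_ε(x)} u + β ⨍_{B_ε(x)} u} for x ∈ Ω and u = F on Γ. -/

import Mathlib

open MeasureTheory Metric Set Classical ENNReal

/-- The obstacle dynamic programming operator. -/
noncomputable def dppT {N : ℕ} (Ω : Set (EuclideanSpace ℝ (Fin N)))
    (Ψ : EuclideanSpace ℝ (Fin N) → ℝ) (α β ε : ℝ)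
    (v : EuclideanSpace ℝ (Fin N) → ℝ) : EuclideanSpace ℝ (Fin N) → ℝ :=
  fun x => if x ∈ Ω then
      max (Ψ x) (α / 2 * sSup (v '' ball x ε) + α / 2 * sInf (v '' ball x ε)
        + β * ⨍ y in ball x ε, v y)
    else v x


variable {N : ℕ}

lemma meas_sSup_ball {ε C : ℝ} (hε : 0 < ε) {v : EuclideanSpace ℝ (Fin N) → ℝ}
    (hvb : ∀ y, |v y| ≤ C) :
    Measurable fun x : EuclideanSpace ℝ (Fin N) => sSup (v '' ball x ε) := by
  apply measurable_of_Ioi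
  intro a
  refine IsOpen.measurableSet ?_
  rw [Metric.isOpen_iff]
  intro x hx
  have hne : (v '' ball x ε).Nonempty := (nonempty_ball.2 hε).image v
  obtain ⟨b, ⟨y, hy, rfl⟩, hab⟩ := exists_lt_of_lt_csSup hne hx
  refine ⟨ε - dist y x, by simpa [sub_pos] using mem_ball.1 hy, fun x' hx' => ?_⟩
  have hy' : y ∈ ball x' ε := by
    have h1 := mem_ball.1 hx'
    have : dist y x' ≤ dist y x + dist x' x := by
      rw [dist_comm x' x]; exact dist_triangle y x x'
    exact mem_ball.2 (by linarith)
  have hbdd : BddAbove (v '' ball x' ε) := by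
    refine ⟨C, ?_⟩; rintro _ ⟨z, -, rfl⟩; exact (abs_le.1 (hvb z)).2
  exact lt_of_lt_of_le hab (le_csSup hbdd ⟨y, hy', rfl⟩)

lemma meas_sInf_ball {ε C : ℝ} (hε : 0 < ε) {v : EuclideanSpace ℝ (Fin N) → ℝ}
    (hvb : ∀ y, |v y| ≤ C) :
    Measurable fun x : EuclideanSpace ℝ (Fin N) => sInf (v '' ball x ε) := by
  apply measurable_of_Iio
  intro a
  refine IsOpen.measurableSet ?_
  rw [Metric.isOpen_iff]
  intro x hx
  have hne : (v '' ball x ε).Nonempty := (nonempty_ball.2 hε).image v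
  obtain ⟨b, ⟨y, hy, rfl⟩, hab⟩ := exists_lt_of_csInf_lt hne hx
  refine ⟨ε - dist y x, by simpa [sub_pos] using mem_ball.1 hy, fun x' hx' => ?_⟩
  have hy' : y ∈ ball x' ε := by
    have h1 := mem_ball.1 hx'
    have : dist y x' ≤ dist y x + dist x' x := by
      rw [dist_comm x' x]; exact dist_triangle y x x'
    exact mem_ball.2 (by linarith)
  have hbdd : BddBelow (v '' ball x' ε) := by
    refine ⟨-C, ?_⟩; rintro _ ⟨z, -, rfl⟩; exact (abs_le.1 (hvb z)).1
  exact lt_of_le_of_lt (csInf_le hbdd ⟨y, hy', rfl⟩) hab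

lemma meas_integral_ball {ε : ℝ} {v : EuclideanSpace ℝ (Fin N) → ℝ} (hv : Measurable v) :
    Measurable fun x : EuclideanSpace ℝ (Fin N) => ∫ y in ball x ε, v y := by
  have hopen : IsOpen {p : EuclideanSpace ℝ (Fin N) × EuclideanSpace ℝ (Fin N) | dist p.2 p.1 < ε} :=
    isOpen_lt (continuous_snd.dist continuous_fst) continuous_const
  set g : EuclideanSpace ℝ (Fin N) → EuclideanSpace ℝ (Fin N) → ℝ :=
    fun x y => if dist y x < ε then v y else 0 with hg
  have hmeas : StronglyMeasurable (Function.uncurry g) := by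
    apply Measurable.stronglyMeasurable
    exact Measurable.ite hopen.measurableSet (hv.comp measurable_snd) measurable_const
  have h := hmeas.integral_prod_right' (ν := volume)
  have heq : (fun x : EuclideanSpace ℝ (Fin N) => ∫ y in ball x ε, v y)
      = fun x => ∫ y, g x y := by
    funext x
    rw [← integral_indicator measurableSet_ball]
    simp [hg, Set.indicator_apply, mem_ball]
  rw [heq]
  exact h.measurable

lemma integrableOn_of_bound {v : EuclideanSpace ℝ (Fin N) → ℝ} (hv : Measurable v) {C : ℝ}
    (hvb : ∀ y, |v y| ≤ C) {s : Set (EuclideanSpace ℝ (Fin N))} (hs : volume s < ∞) :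
    IntegrableOn v s := by
  refine Integrable.mono' (integrableOn_const (C := C) hs.ne) hv.aestronglyMeasurable ?_
  exact ae_of_all _ fun y => by simpa [Real.norm_eq_abs] using hvb y

lemma abs_sSup_ball_le {ε C : ℝ} (hε : 0 < ε) {v : EuclideanSpace ℝ (Fin N) → ℝ}
    (hvb : ∀ y, |v y| ≤ C) (x : EuclideanSpace ℝ (Fin N)) : |sSup (v '' ball x ε)| ≤ C := by
  have hne : (v '' ball x ε).Nonempty := (nonempty_ball.2 hε).image v
  have hbdd : BddAbove (v '' ball x ε) := ⟨C, by rintro _ ⟨z, -, rfl⟩; exact (abs_le.1 (hvb z)).2⟩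
  refine abs_le.2 ⟨?_, csSup_le hne (by rintro _ ⟨z, -, rfl⟩; exact (abs_le.1 (hvb z)).2)⟩
  exact le_trans (abs_le.1 (hvb x)).1 (le_csSup hbdd ⟨x, mem_ball_self hε, rfl⟩)

lemma abs_sInf_ball_le {ε C : ℝ} (hε : 0 < ε) {v : EuclideanSpace ℝ (Fin N) → ℝ}
    (hvb : ∀ y, |v y| ≤ C) (x : EuclideanSpace ℝ (Fin N)) : |sInf (v '' ball x ε)| ≤ C := by
  have hne : (v '' ball x ε).Nonempty := (nonempty_ball.2 hε).image v
  have hbdd : BddBelow (v '' ball x ε) := ⟨-C, by rintro _ ⟨z, -, rfl⟩; exact (abs_le.1 (hvb z)).1⟩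
  refine abs_le.2 ⟨le_csInf hne (by rintro _ ⟨z, -, rfl⟩; exact (abs_le.1 (hvb z)).1), ?_⟩
  exact le_trans (csInf_le hbdd ⟨x, mem_ball_self hε, rfl⟩) (abs_le.1 (hvb x)).2

lemma abs_avg_ball_le {ε C : ℝ} (hε : 0 < ε) {v : EuclideanSpace ℝ (Fin N) → ℝ}
    (hv : Measurable v) (hvb : ∀ y, |v y| ≤ C) (x : EuclideanSpace ℝ (Fin N)) : |⨍ y in ball x ε, v y| ≤ C := by
  have hpos : 0 < (volume (ball x ε)).toReal :=
    ENNReal.toReal_pos (measure_ball_pos volume x hε).ne' measure_ball_lt_top.ne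
  rw [setAverage_eq, measureReal_def, smul_eq_mul, abs_mul, abs_inv, abs_of_nonneg ENNReal.toReal_nonneg]
  have hI : |∫ y in ball x ε, v y| ≤ C * (volume (ball x ε)).toReal := by
    simpa [Real.norm_eq_abs, measureReal_def] using
      norm_setIntegral_le_of_norm_le_const (μ := volume) (f := v) measure_ball_lt_top
        (fun y _ => by simpa [Real.norm_eq_abs] using hvb y)
  calc (volume (ball x ε)).toReal⁻¹ * |∫ y in ball x ε, v y|
      ≤ (volume (ball x ε)).toReal⁻¹ * (C * (volume (ball x ε)).toReal) :=
        mul_le_mul_of_nonneg_left hI (inv_nonneg.2 hpos.le)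
    _ = C := by field_simp

lemma dppT_measurable {Ω : Set (EuclideanSpace ℝ (Fin N))} (hΩ : MeasurableSet Ω)
    {Ψ : EuclideanSpace ℝ (Fin N) → ℝ} (hΨ : Measurable Ψ) {α β ε : ℝ} (hε : 0 < ε)
    {v : EuclideanSpace ℝ (Fin N) → ℝ} (hv : Measurable v) {C : ℝ} (hvb : ∀ y, |v y| ≤ C) :
    Measurable (dppT Ω Ψ α β ε v) := by
  unfold dppT
  refine Measurable.ite hΩ (hΨ.max ?_) hv
  have h1 := meas_sSup_ball hε hvb
  have h2 := meas_sInf_ball hε hvb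
  have h3 : Measurable fun x : EuclideanSpace ℝ (Fin N) => ⨍ y in ball x ε, v y := by
    have : (fun x : EuclideanSpace ℝ (Fin N) => ⨍ y in ball x ε, v y)
        = fun x => (volume (ball (0 : EuclideanSpace ℝ (Fin N)) ε)).toReal⁻¹
          * ∫ y in ball x ε, v y := by
      funext x
      rw [setAverage_eq, measureReal_def, smul_eq_mul, Measure.addHaar_ball_center volume x ε]
    rw [this]
    exact (meas_integral_ball hv).const_mul _
  exact ((h1.const_mul _).add (h2.const_mul _)).add (h3.const_mul _)

lemma dppT_bound {Ω : Set (EuclideanSpace ℝ (Fin N))}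
    {Ψ : EuclideanSpace ℝ (Fin N) → ℝ} {α ε : ℝ} (hα0 : 0 ≤ α) (hα1 : α ≤ 1) (hε : 0 < ε)
    {v : EuclideanSpace ℝ (Fin N) → ℝ} (hv : Measurable v) {C : ℝ} (hΨb : ∀ y, |Ψ y| ≤ C) (hvb : ∀ y, |v y| ≤ C)
    (x : EuclideanSpace ℝ (Fin N)) : |dppT Ω Ψ α (1 - α) ε v x| ≤ C := by
  unfold dppT
  by_cases hx : x ∈ Ω
  · rw [if_pos hx]
    have hS := abs_le.1 (abs_sSup_ball_le hε hvb x)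
    have hI := abs_le.1 (abs_sInf_ball_le hε hvb x)
    have hM := abs_le.1 (abs_avg_ball_le hε hv hvb x)
    have hP := abs_le.1 (hΨb x)
    rw [abs_le]
    constructor
    · exact le_trans hP.1 (le_max_left _ _)
    · refine max_le hP.2 ?_
      nlinarith [hS.2, hI.2, hM.2, hS.1, hI.1, hM.1]
  · rw [if_neg hx]; exact hvb x

lemma dppT_mono {Ω : Set (EuclideanSpace ℝ (Fin N))}
    {Ψ : EuclideanSpace ℝ (Fin N) → ℝ} {α ε : ℝ} (hα0 : 0 ≤ α) (hα1 : α ≤ 1) (hε : 0 < ε)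
    {v w : EuclideanSpace ℝ (Fin N) → ℝ} (hv : Measurable v) (hw : Measurable w) {C : ℝ}
    (hvb : ∀ y, |v y| ≤ C) (hwb : ∀ y, |w y| ≤ C) (hle : ∀ y, v y ≤ w y)
    (x : EuclideanSpace ℝ (Fin N)) : dppT Ω Ψ α (1 - α) ε v x ≤ dppT Ω Ψ α (1 - α) ε w x := by
  unfold dppT
  by_cases hx : x ∈ Ω
  · rw [if_pos hx, if_pos hx]
    have hne : (ball x ε).Nonempty := nonempty_ball.2 hε
    have hbddw : BddAbove (w '' ball x ε) :=
      ⟨C, by rintro _ ⟨z, -, rfl⟩; exact (abs_le.1 (hwb z)).2⟩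
    have hbddv : BddBelow (v '' ball x ε) :=
      ⟨-C, by rintro _ ⟨z, -, rfl⟩; exact (abs_le.1 (hvb z)).1⟩
    have hS : sSup (v '' ball x ε) ≤ sSup (w '' ball x ε) := by
      refine csSup_le (hne.image v) ?_
      rintro _ ⟨y, hy, rfl⟩
      exact le_trans (hle y) (le_csSup hbddw ⟨y, hy, rfl⟩)
    have hI : sInf (v '' ball x ε) ≤ sInf (w '' ball x ε) := by
      refine le_csInf (hne.image w) ?_
      rintro _ ⟨y, hy, rfl⟩
      exact le_trans (csInf_le hbddv ⟨y, hy, rfl⟩) (hle y)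
    have hM : (⨍ y in ball x ε, v y) ≤ ⨍ y in ball x ε, w y := by
      rw [setAverage_eq, setAverage_eq, smul_eq_mul, smul_eq_mul]
      refine mul_le_mul_of_nonneg_left ?_ (inv_nonneg.2 ENNReal.toReal_nonneg)
      exact setIntegral_mono (integrableOn_of_bound hv hvb measure_ball_lt_top)
        (integrableOn_of_bound hw hwb measure_ball_lt_top) hle
    refine max_le_max le_rfl ?_
    have h1 : α / 2 * sSup (v '' ball x ε) ≤ α / 2 * sSup (w '' ball x ε) :=
      mul_le_mul_of_nonneg_left hS (by linarith)
    have h2 : α / 2 * sInf (v '' ball x ε) ≤ α / 2 * sInf (w '' ball x ε) :=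
      mul_le_mul_of_nonneg_left hI (by linarith)
    have h3 : (1 - α) * (⨍ y in ball x ε, v y) ≤ (1 - α) * ⨍ y in ball x ε, w y :=
      mul_le_mul_of_nonneg_left hM (by linarith)
    linarith
  · rw [if_neg hx, if_neg hx]; exact hle x

lemma dppT_key {Ω : Set (EuclideanSpace ℝ (Fin N))} (hΩ : MeasurableSet Ω)
    (hΩf : volume Ω < ∞) {Ψ : EuclideanSpace ℝ (Fin N) → ℝ} {α ε : ℝ}
    (hα0 : 0 ≤ α) (hα1 : α ≤ 1) (hε : 0 < ε)
    {v w : EuclideanSpace ℝ (Fin N) → ℝ} (hv : Measurable v) (hw : Measurable w) {C : ℝ}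
    (hvb : ∀ y, |v y| ≤ C) (hwb : ∀ y, |w y| ≤ C)
    (hle : ∀ y, v y ≤ w y) (hout : ∀ y, y ∉ Ω → w y = v y)
    {s : ℝ} (hs0 : 0 ≤ s) (hs : ∀ y, w y - v y ≤ s)
    {x : EuclideanSpace ℝ (Fin N)} (hx : x ∈ Ω) :
    dppT Ω Ψ α (1 - α) ε w x ≤ dppT Ω Ψ α (1 - α) ε v x
      + (α * s + (1 - α) * ((volume (ball (0 : EuclideanSpace ℝ (Fin N)) ε)).toReal⁻¹
          * ∫ y in Ω, (w y - v y))) := by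
  have hne : (ball x ε).Nonempty := nonempty_ball.2 hε
  have hbddAv : BddAbove (v '' ball x ε) :=
    ⟨C, by rintro _ ⟨z, -, rfl⟩; exact (abs_le.1 (hvb z)).2⟩
  have hbddBw : BddBelow (w '' ball x ε) :=
    ⟨-C, by rintro _ ⟨z, -, rfl⟩; exact (abs_le.1 (hwb z)).1⟩
  have hiw : IntegrableOn w (ball x ε) := integrableOn_of_bound hw hwb measure_ball_lt_top
  have hiv : IntegrableOn v (ball x ε) := integrableOn_of_bound hv hvb measure_ball_lt_top
  have hiwv : IntegrableOn (fun y => w y - v y) (ball x ε) := hiw.sub hiv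
  have hiwvΩ : IntegrableOn (fun y => w y - v y) Ω :=
    (integrableOn_of_bound hw hwb hΩf).sub (integrableOn_of_bound hv hvb hΩf)
  set a : ℝ := (volume (ball (0 : EuclideanSpace ℝ (Fin N)) ε)).toReal⁻¹
    * ∫ y in Ω, (w y - v y) with ha
  have hIΩnn : 0 ≤ ∫ y in Ω, (w y - v y) :=
    setIntegral_nonneg hΩ fun y _ => sub_nonneg.2 (hle y)
  have ha0 : 0 ≤ a := mul_nonneg (inv_nonneg.2 ENNReal.toReal_nonneg) hIΩnn
  -- sSup estimate
  have hS : sSup (w '' ball x ε) ≤ sSup (v '' ball x ε) + s := by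
    refine csSup_le (hne.image w) ?_
    rintro _ ⟨y, hy, rfl⟩
    have h1 : w y ≤ v y + s := by linarith [hs y]
    exact h1.trans (add_le_add_left (le_csSup hbddAv ⟨y, hy, rfl⟩) s)
  -- sInf estimate
  have hI : sInf (w '' ball x ε) ≤ sInf (v '' ball x ε) + s := by
    have h2 : sInf (w '' ball x ε) - s ≤ sInf (v '' ball x ε) := by
      refine le_csInf (hne.image v) ?_
      rintro _ ⟨y, hy, rfl⟩
      have := csInf_le hbddBw (⟨y, hy, rfl⟩ : w y ∈ w '' ball x ε)
      linarith [hs y]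
    linarith
  -- average estimate
  have hM : (⨍ y in ball x ε, w y) ≤ (⨍ y in ball x ε, v y) + a := by
    have hvol : (volume (ball x ε)).toReal
        = (volume (ball (0 : EuclideanSpace ℝ (Fin N)) ε)).toReal := by
      rw [Measure.addHaar_ball_center volume x ε]
    set Iw : ℝ := ∫ y in ball x ε, w y with hIw
    set Iv : ℝ := ∫ y in ball x ε, v y with hIv
    set Id : ℝ := ∫ y in ball x ε, (w y - v y) with hId
    set IΩ : ℝ := ∫ y in Ω, (w y - v y) with hIΩ
    set c : ℝ := (volume (ball (0 : EuclideanSpace ℝ (Fin N)) ε)).toReal with hc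
    have hsub : Iw - Iv = Id := (integral_sub hiw hiv).symm
    have hsplit : Id = ∫ y in ball x ε ∩ Ω, (w y - v y) := by
      rw [hId, ← integral_inter_add_diff hΩ hiwv]
      have hz : ∫ y in ball x ε \ Ω, (w y - v y) = 0 :=
        setIntegral_eq_zero_of_forall_eq_zero fun y hy => by rw [hout y hy.2]; ring
      rw [hz, add_zero]
    have hmono : ∫ y in ball x ε ∩ Ω, (w y - v y) ≤ IΩ := by
      refine setIntegral_mono_set hiwvΩ ?_ ?_
      · exact ae_of_all _ fun y => sub_nonneg.2 (hle y)
      · exact HasSubset.Subset.eventuallyLE inter_subset_right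
    have hfinal : Iw ≤ Iv + IΩ := by
      rw [hsplit] at hsub
      linarith [hmono]
    rw [setAverage_eq, setAverage_eq, measureReal_def, smul_eq_mul, smul_eq_mul, ha, hvol, ← mul_add]
    exact mul_le_mul_of_nonneg_left hfinal (inv_nonneg.2 ENNReal.toReal_nonneg)
  -- combine
  unfold dppT
  rw [if_pos hx, if_pos hx]
  have hD : 0 ≤ α * s + (1 - α) * a :=
    add_nonneg (mul_nonneg hα0 hs0) (mul_nonneg (by linarith) ha0)
  refine max_le ?_ ?_
  · exact le_trans (le_max_left _ _) (by linarith)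
  · have e1 : α / 2 * sSup (w '' ball x ε) ≤ α / 2 * (sSup (v '' ball x ε) + s) :=
      mul_le_mul_of_nonneg_left hS (by linarith)
    have e2 : α / 2 * sInf (w '' ball x ε) ≤ α / 2 * (sInf (v '' ball x ε) + s) :=
      mul_le_mul_of_nonneg_left hI (by linarith)
    have e3 : (1 - α) * (⨍ y in ball x ε, w y) ≤ (1 - α) * ((⨍ y in ball x ε, v y) + a) :=
      mul_le_mul_of_nonneg_left hM (by linarith)
    have hmax : α / 2 * sSup (v '' ball x ε) + α / 2 * sInf (v '' ball x ε)
        + (1 - α) * ⨍ y in ball x ε, v y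
        ≤ max (Ψ x) (α / 2 * sSup (v '' ball x ε) + α / 2 * sInf (v '' ball x ε)
          + (1 - α) * ⨍ y in ball x ε, v y) := le_max_right _ _
    calc α / 2 * sSup (w '' ball x ε) + α / 2 * sInf (w '' ball x ε)
        + (1 - α) * ⨍ y in ball x ε, w y
        ≤ α / 2 * (sSup (v '' ball x ε) + s) + α / 2 * (sInf (v '' ball x ε) + s)
          + (1 - α) * ((⨍ y in ball x ε, v y) + a) := by linarith
      _ = (α / 2 * sSup (v '' ball x ε) + α / 2 * sInf (v '' ball x ε)
          + (1 - α) * ⨍ y in ball x ε, v y) + (α * s + (1 - α) * a) := by ring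
      _ ≤ max (Ψ x) (α / 2 * sSup (v '' ball x ε) + α / 2 * sInf (v '' ball x ε)
          + (1 - α) * ⨍ y in ball x ε, v y) + (α * s + (1 - α) * a) := by linarith

noncomputable def dppIter {N : ℕ} (Ω : Set (EuclideanSpace ℝ (Fin N)))
    (Ψ F : EuclideanSpace ℝ (Fin N) → ℝ) (α ε C : ℝ) :
    ℕ → EuclideanSpace ℝ (Fin N) → ℝ
  | 0 => fun x => if x ∈ Ω then -C else F x
  | n + 1 => dppT Ω Ψ α (1 - α) ε (dppIter Ω Ψ F α ε C n)

/-- Existence of a bounded Borel solution of the obstacle DPP. -/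
theorem dpp_existence {N : ℕ} (Ω : Set (EuclideanSpace ℝ (Fin N)))
    (hΩo : IsOpen Ω) (hΩb : Bornology.IsBounded Ω)
    (ε₀ ε α : ℝ) (hε₀ : 0 < ε₀) (hε : 0 < ε) (hεε₀ : ε ≤ ε₀)
    (hα : α ∈ Set.Ico (0:ℝ) 1)
    (Γ : Set (EuclideanSpace ℝ (Fin N)))
    (hΓ : Γ = {x | x ∉ Ω ∧ Metric.infDist x Ω < ε₀})
    (X : Set (EuclideanSpace ℝ (Fin N))) (hX : X = Ω ∪ Γ)
    (F Ψ : EuclideanSpace ℝ (Fin N) → ℝ) (hF : Measurable F) (hΨ : Measurable Ψ)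
    (CF CΨ : ℝ) (hFb : ∀ x, |F x| ≤ CF) (hΨb : ∀ x, |Ψ x| ≤ CΨ)
    (hΨF : ∀ x ∈ Γ, Ψ x ≤ F x) :
    ∃ u : EuclideanSpace ℝ (Fin N) → ℝ, Measurable u ∧ (∃ C, ∀ x, |u x| ≤ C) ∧
      (∀ x ∈ Ω, u x = dppT Ω Ψ α (1 - α) ε u x) ∧ (∀ x ∈ Γ, u x = F x) := by
  obtain ⟨hα0, hα1⟩ := hα
  have hα1' : α ≤ 1 := hα1.le
  have hβ : (0:ℝ) ≤ 1 - α := by linarith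
  set C : ℝ := max CF CΨ with hCdef
  have hFC : ∀ x, |F x| ≤ C := fun x => (hFb x).trans (le_max_left _ _)
  have hΨC : ∀ x, |Ψ x| ≤ C := fun x => (hΨb x).trans (le_max_right _ _)
  have hC0 : 0 ≤ C := le_trans (abs_nonneg (F 0)) (hFC 0)
  have hΩm : MeasurableSet Ω := hΩo.measurableSet
  have hΩf : volume Ω < ∞ := hΩb.measure_lt_top
  set useq := dppIter Ω Ψ F α ε C with huseq
  -- measurability and bounds of the iterates
  have hmb : ∀ n, Measurable (useq n) ∧ ∀ y, |useq n y| ≤ C := by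
    intro n
    induction n with
    | zero =>
      constructor
      · exact Measurable.ite hΩm measurable_const hF
      · intro y
        simp only [huseq, dppIter]
        split
        · rw [abs_neg, abs_of_nonneg hC0]
        · exact hFC y
    | succ n ih =>
      exact ⟨dppT_measurable hΩm hΨ hε ih.1 ih.2,
        dppT_bound hα0 hα1' hε ih.1 hΨC ih.2⟩
  have hmeas : ∀ n, Measurable (useq n) := fun n => (hmb n).1
  have hb : ∀ n y, |useq n y| ≤ C := fun n => (hmb n).2
  -- iterates agree with F outside Ω
  have hout : ∀ n y, y ∉ Ω → useq n y = F y := by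
    intro n
    induction n with
    | zero => intro y hy; simp only [huseq, dppIter, if_neg hy]
    | succ n ih =>
      intro y hy
      simp only [huseq, dppIter, dppT, if_neg hy]
      exact ih y hy
  -- monotonicity of the iterates
  have hmono1 : ∀ n y, useq n y ≤ useq (n + 1) y := by
    intro n
    induction n with
    | zero =>
      intro y
      by_cases hy : y ∈ Ω
      · show useq 0 y ≤ dppT Ω Ψ α (1 - α) ε (useq 0) y
        simp only [huseq, dppIter, dppT, if_pos hy]
        exact le_trans (by linarith [(abs_le.1 (hΨC y)).1]) (le_max_left _ _)
      · rw [hout 0 y hy, hout 1 y hy]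
    | succ n ih =>
      intro y
      exact dppT_mono hα0 hα1' hε (hmeas n) (hmeas (n+1)) (hb n) (hb (n+1)) ih y
  have hmono : ∀ y, Monotone fun n => useq n y := fun y =>
    monotone_nat_of_le_succ fun n => hmono1 n y
  -- the limit function
  set u : EuclideanSpace ℝ (Fin N) → ℝ := fun x => ⨆ n, useq n x with hu
  have hbdd : ∀ x, BddAbove (range fun n => useq n x) := fun x =>
    ⟨C, by rintro _ ⟨n, rfl⟩; exact (abs_le.1 (hb n x)).2⟩
  have htend : ∀ x, Filter.Tendsto (fun n => useq n x) Filter.atTop (nhds (u x)) :=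
    fun x => tendsto_atTop_ciSup (hmono x) (hbdd x)
  have humeas : Measurable u :=
    measurable_of_tendsto_metrizable hmeas (tendsto_pi_nhds.2 htend)
  have hule : ∀ n x, useq n x ≤ u x := fun n x => le_ciSup (hbdd x) n
  have hub : ∀ x, |u x| ≤ C := fun x => abs_le.2
    ⟨le_trans (abs_le.1 (hb 0 x)).1 (hule 0 x),
     ciSup_le fun n => (abs_le.1 (hb n x)).2⟩
  have huout : ∀ y, y ∉ Ω → u y = F y := by
    intro y hy
    have : (fun n => useq n y) = fun _ => F y := funext fun n => hout n y hy
    rw [hu]; simp only [this]; exact ciSup_const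
  have huoutn : ∀ n y, y ∉ Ω → u y = useq n y := fun n y hy => by
    rw [huout y hy, hout n y hy]
  -- u ≤ T u
  have hTle : ∀ x, u x ≤ dppT Ω Ψ α (1 - α) ε u x := by
    intro x
    by_cases hx : x ∈ Ω
    · refine ciSup_le fun n => ?_
      cases n with
      | zero =>
        refine le_trans (hmono1 0 x) ?_
        exact dppT_mono hα0 hα1' hε (hmeas 0) humeas (hb 0) hub (hule 0) x
      | succ n =>
        exact dppT_mono hα0 hα1' hε (hmeas n) humeas (hb n) hub (hule n) x
    · rw [show dppT Ω Ψ α (1 - α) ε u x = u x from if_neg hx]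
  -- the integral error terms
  set I : ℕ → ℝ := fun n => ∫ y in Ω, (u y - useq n y) with hI
  have hInn : ∀ n, 0 ≤ I n := fun n =>
    setIntegral_nonneg hΩm fun y _ => sub_nonneg.2 (hule n y)
  have hItend : Filter.Tendsto I Filter.atTop (nhds 0) := by
    have h0 : (0:ℝ) = ∫ _ in Ω, (0:ℝ) := by simp
    rw [h0]
    refine tendsto_integral_of_dominated_convergence (fun _ => 2 * C)
      (fun n => ((humeas.sub (hmeas n)).aestronglyMeasurable)) ?_ ?_ ?_
    · exact integrableOn_const (C := 2 * C) hΩf.ne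
    · intro n
      refine ae_of_all _ fun y => ?_
      have h1 := abs_le.1 (hub y); have h2 := abs_le.1 (hb n y)
      rw [Real.norm_eq_abs, abs_le]
      constructor <;> linarith
    · refine ae_of_all _ fun y => ?_
      have := Filter.Tendsto.sub (tendsto_const_nhds (x := u y)) (htend y)
      simpa using this
  set κ : ℝ := (volume (ball (0 : EuclideanSpace ℝ (Fin N)) ε)).toReal with hκ
  set aseq : ℕ → ℝ := fun n => κ⁻¹ * I n with haseq
  have hann : ∀ n, 0 ≤ aseq n := fun n =>
    mul_nonneg (inv_nonneg.2 ENNReal.toReal_nonneg) (hInn n)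
  have hatend : Filter.Tendsto aseq Filter.atTop (nhds 0) := by
    have := hItend.const_mul κ⁻¹
    simpa using this
  -- the sup error terms
  set sseq : ℕ → ℝ := fun n => sSup (range fun x => u x - useq n x) with hsseq
  have hsbdd : ∀ n, BddAbove (range fun x => u x - useq n x) := fun n =>
    ⟨2 * C, by
      rintro _ ⟨x, rfl⟩
      dsimp only
      have h1 := abs_le.1 (hub x); have h2 := abs_le.1 (hb n x)
      linarith⟩
  have hsle : ∀ n x, u x - useq n x ≤ sseq n := fun n x => le_csSup (hsbdd n) ⟨x, rfl⟩
  have hsnn : ∀ n, 0 ≤ sseq n := fun n =>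
    le_trans (sub_nonneg.2 (hule n 0)) (hsle n 0)
  -- the key recursive estimate
  have hkey : ∀ n x, dppT Ω Ψ α (1 - α) ε u x
      ≤ useq (n + 1) x + (α * sseq n + (1 - α) * aseq n) := by
    intro n x
    by_cases hx : x ∈ Ω
    · have := dppT_key (Ψ := Ψ) hΩm hΩf hα0 hα1' hε (hmeas n) humeas (hb n) hub
        (hule n) (huoutn n) (hsnn n) (fun y => hsle n y) hx
      simpa only [huseq, dppIter] using this
    · rw [show dppT Ω Ψ α (1 - α) ε u x = u x from if_neg hx, huoutn (n+1) x hx]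
      have := add_nonneg (mul_nonneg hα0 (hsnn n)) (mul_nonneg hβ (hann n))
      linarith
  have hrec : ∀ n, sseq (n + 1) ≤ α * sseq n + (1 - α) * aseq n := by
    intro n
    refine csSup_le ⟨u 0 - useq (n+1) 0, ⟨0, rfl⟩⟩ ?_
    rintro _ ⟨x, rfl⟩
    dsimp only
    have h1 := hTle x
    have h2 := hkey n x
    have h3 := hule (n+1) x
    linarith
  -- sseq tends to 0
  have hsanti : Antitone sseq := antitone_nat_of_succ_le fun n =>
    csSup_le ⟨u 0 - useq (n+1) 0, ⟨0, rfl⟩⟩ (by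
      rintro _ ⟨x, rfl⟩
      dsimp only
      exact le_trans (by linarith [hmono1 n x]) (hsle n x))
  set L : ℝ := ⨅ n, sseq n with hL
  have hstend : Filter.Tendsto sseq Filter.atTop (nhds L) :=
    tendsto_atTop_ciInf hsanti ⟨0, by rintro _ ⟨n, rfl⟩; exact hsnn n⟩
  have hL0 : 0 ≤ L := ge_of_tendsto hstend (Filter.Eventually.of_forall hsnn)
  have hLle : L ≤ α * L + (1 - α) * 0 := by
    refine le_of_tendsto_of_tendsto
      (hstend.comp (Filter.tendsto_add_atTop_nat 1)) ?_
      (Filter.Eventually.of_forall hrec)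
    exact ((hstend.const_mul α).add (hatend.const_mul (1 - α)))
  have hLz : L = 0 := by nlinarith [mul_nonneg hβ hL0]
  have hst0 : Filter.Tendsto sseq Filter.atTop (nhds 0) := hLz ▸ hstend
  -- conclusion
  refine ⟨u, humeas, ⟨C, hub⟩, fun x hx => ?_, fun x hxΓ => ?_⟩
  · refine le_antisymm (hTle x) ?_
    have hforall : ∀ n, dppT Ω Ψ α (1 - α) ε u x ≤ u x + (α * sseq n + (1 - α) * aseq n) :=
      fun n => le_trans (hkey n x) (by linarith [hule (n+1) x])
    have htt : Filter.Tendsto (fun n => u x + (α * sseq n + (1 - α) * aseq n))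
        Filter.atTop (nhds (u x + (α * 0 + (1 - α) * 0))) :=
      tendsto_const_nhds.add ((hst0.const_mul α).add (hatend.const_mul (1 - α)))
    have := ge_of_tendsto htt (Filter.Eventually.of_forall hforall)
    simpa using this
  · have hxn : x ∉ Ω := by rw [hΓ] at hxΓ; exact hxΓ.1
    exact huout x hxn
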